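/- Let p, ℓ, A, B be real numbers with B > 0 and p − ℓ > −1. Then I_{p,ℓ}(A,B) = Σ_{n≥0} binom(p−ℓ, n) [ e^{(n+ℓ)A + (n+ℓ)²B²/2} G(−A/B − (n+ℓ)B) + e^{(p−n)A + (p−n)²B²/2} G(A/B + (p−n)B) ], where both series converge absolutely. (This is the exact term-by-term integrated binomial-series representation of I_{p,ℓ} obtained by splitting the integral at v* = −A/B.) -/

import Mathlib

open MeasureTheory Real

/-- The standard Gaussian density `φ(v) = e^{-v²/2}/√(2π)` on `ℝ`. -/
noncomputable def gaussPDF (v : ℝ) : ℝ := Real.exp (-v ^ 2 / 2) / Real.sqrt (2 * Real.pi)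

/-- The standard normal cumulative distribution function
`G(z) = (1 + erf(z/√2))/2 = ∫_{-∞}^z φ(v) dv`. -/
noncomputable def stdNormalCDF (z : ℝ) : ℝ := ∫ v in Set.Iic z, gaussPDF v

/-- Generalized binomial coefficient `binom(α, n) = (∏_{i=0}^{n-1} (α - i)) / n!`. -/
noncomputable def gbinom (α : ℝ) (n : ℕ) : ℝ :=
  (∏ i ∈ Finset.range n, (α - (i : ℝ))) / (n.factorial : ℝ)

/-- `I_{p,ℓ}(A,B) = ∫_ℝ φ(v) (1 + e^{A+Bv})^{p-ℓ} e^{ℓ(A+Bv)} dv`. -/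
noncomputable def Iint (p ℓ A B : ℝ) : ℝ :=
  ∫ v : ℝ, gaussPDF v * (1 + Real.exp (A + B * v)) ^ (p - ℓ) * Real.exp (ℓ * (A + B * v))

open Set Filter Topology

lemma gbinom_succ (α : ℝ) (n : ℕ) :
    gbinom α (n + 1) = gbinom α n * ((α - n) / (n + 1)) := by
  simp only [gbinom, Finset.prod_range_succ, Nat.factorial_succ]
  push_cast
  rw [div_mul_div_comm]
  congr 1
  ring

lemma abs_gbinom_succ {α : ℝ} {n : ℕ} (hn : α ≤ n) :
    |gbinom α (n + 1)| = |gbinom α n| * ((n - α) / (n + 1)) := by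
  rw [gbinom_succ, abs_mul, abs_div, abs_of_nonpos (by linarith : α - (n:ℝ) ≤ 0),
    abs_of_pos (by positivity : (0:ℝ) < (n:ℝ) + 1)]
  ring_nf

lemma gaussPDF_pos (v : ℝ) : 0 < gaussPDF v := by
  unfold gaussPDF
  positivity

lemma continuous_gaussPDF : Continuous gaussPDF := by
  unfold gaussPDF
  fun_prop

lemma gaussPDF_le (v : ℝ) : gaussPDF v ≤ 1 / Real.sqrt (2 * Real.pi) := by
  unfold gaussPDF
  have h1 : Real.exp (-v ^ 2 / 2) ≤ 1 := Real.exp_le_one_iff.2 (by nlinarith [sq_nonneg v])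
  have h2 : (0:ℝ) < Real.sqrt (2 * Real.pi) := Real.sqrt_pos.2 (by positivity)
  exact div_le_div_of_nonneg_right h1 h2.le

lemma aux_ineq {β x : ℝ} (hx : 0 ≤ x) (h1 : 0 ≤ 1 - β * x) (hβ : 0 < β) :
    (1 - β * x) * (1 + x) ^ β ≤ 1 := by
  have hpos : (0:ℝ) < 1 + x := by linarith
  have h2 : (1 + x : ℝ) ^ β ≤ Real.exp (β * x) := by
    rw [Real.rpow_def_of_pos hpos]
    apply Real.exp_le_exp.2
    have := Real.log_le_sub_one_of_pos hpos
    nlinarith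
  have h3 : 1 - β * x ≤ Real.exp (-(β * x)) := by
    have := Real.add_one_le_exp (-(β * x)); linarith
  calc (1 - β * x) * (1 + x) ^ β ≤ Real.exp (-(β * x)) * Real.exp (β * x) :=
        mul_le_mul h3 h2 (by positivity) (Real.exp_nonneg _)
    _ = 1 := by rw [← Real.exp_add]; simp

lemma gbinom_bound {α : ℝ} (hα : -1 < α) :
    ∃ C : ℝ, 0 ≤ C ∧ ∀ n : ℕ, |gbinom α n| * ((n:ℝ) + 1) ^ (α + 1) ≤ C := by
  set β := α + 1 with hβdef
  have hβ : 0 < β := by linarith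
  set c : ℕ → ℝ := fun n => |gbinom α n| * ((n:ℝ) + 1) ^ β with hc
  have hc0 : ∀ n, 0 ≤ c n := fun n => by
    apply mul_nonneg (abs_nonneg _) (Real.rpow_nonneg (by positivity) _)
  obtain ⟨N, hN⟩ := exists_nat_ge α
  have hstep : ∀ n : ℕ, N ≤ n → c (n + 1) ≤ c n := by
    intro n hn
    have hαn : α ≤ (n:ℝ) := hN.trans (by exact_mod_cast hn)
    have hp1 : (0:ℝ) < (n:ℝ) + 1 := by positivity
    have hx : (0:ℝ) ≤ 1 / ((n:ℝ) + 1) := by positivity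
    have hxe : (1:ℝ) + 1 / ((n:ℝ) + 1) = ((n:ℝ) + 1 + 1) / ((n:ℝ) + 1) := by
      field_simp
    have h1 : 0 ≤ 1 - β * (1 / ((n:ℝ) + 1)) := by
      rw [sub_nonneg, mul_one_div, div_le_one hp1]
      simp only [hβdef]; linarith
    have key := aux_ineq hx h1 hβ
    have hsplit : ((n:ℝ) + 1 + 1) ^ β = ((n:ℝ) + 1) ^ β * (1 + 1 / ((n:ℝ) + 1)) ^ β := by
      rw [← Real.mul_rpow (by positivity) (by positivity)]
      congr 1
      field_simp
    have hratio : ((n:ℝ) - α) / ((n:ℝ) + 1) = 1 - β * (1 / ((n:ℝ) + 1)) := by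
      field_simp [hβdef]
      rw [hβdef]; ring
    simp only [hc]
    rw [abs_gbinom_succ hαn]
    push_cast
    rw [hsplit, hratio]
    calc |gbinom α n| * (1 - β * (1 / ((n:ℝ) + 1))) * (((n:ℝ) + 1) ^ β * (1 + 1 / ((n:ℝ) + 1)) ^ β)
        = |gbinom α n| * ((n:ℝ) + 1) ^ β * ((1 - β * (1 / ((n:ℝ) + 1))) * (1 + 1 / ((n:ℝ) + 1)) ^ β) := by ring
      _ ≤ |gbinom α n| * ((n:ℝ) + 1) ^ β * 1 := by
          apply mul_le_mul_of_nonneg_left key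
          exact mul_nonneg (abs_nonneg _) (Real.rpow_nonneg (by positivity) _)
      _ = |gbinom α n| * ((n:ℝ) + 1) ^ β := by ring
  have hdec : ∀ n : ℕ, N ≤ n → c n ≤ c N := by
    intro n hn
    induction n, hn using Nat.le_induction with
    | base => exact le_refl _
    | succ n hn ih => exact (hstep n hn).trans ih
  refine ⟨∑ i ∈ Finset.range (N + 1), c i, Finset.sum_nonneg fun i _ => hc0 i, fun n => ?_⟩
  rcases le_or_gt n N with h | h
  · exact Finset.single_le_sum (fun i _ => hc0 i) (Finset.mem_range.2 (Nat.lt_succ_of_le h))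
  · calc c n ≤ c N := hdec n h.le
      _ ≤ ∑ i ∈ Finset.range (N + 1), c i :=
        Finset.single_le_sum (fun i _ => hc0 i) (Finset.mem_range.2 (Nat.lt_succ_self N))

lemma summable_abs_gbinom_div {α : ℝ} (hα : -1 < α) :
    Summable (fun n : ℕ => |gbinom α n| / ((n:ℝ) + 1)) := by
  obtain ⟨C, hC0, hC⟩ := gbinom_bound hα
  have hsum : Summable (fun n : ℕ => C * ((n:ℝ) + 1) ^ (-(α + 2))) := by
    apply Summable.mul_left
    have h := (Real.summable_nat_rpow (p := -(α + 2))).2 (by linarith)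
    have := (summable_nat_add_iff (f := fun n : ℕ => ((n:ℝ)) ^ (-(α + 2))) 1).2 h
    refine this.congr fun n => ?_
    push_cast
    norm_num
  refine hsum.of_nonneg_of_le (fun n => by positivity) (fun n => ?_)
  have hp1 : (0:ℝ) < (n:ℝ) + 1 := by positivity
  have h1 : |gbinom α n| ≤ C * ((n:ℝ) + 1) ^ (-(α + 1)) := by
    have := hC n
    rw [Real.rpow_neg hp1.le]
    rw [← le_div_iff₀ (Real.rpow_pos_of_pos hp1 _)] at this
    rwa [div_eq_mul_inv] at this
  calc |gbinom α n| / ((n:ℝ) + 1) ≤ C * ((n:ℝ) + 1) ^ (-(α + 1)) / ((n:ℝ) + 1) :=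
        div_le_div_of_nonneg_right h1 hp1.le
    _ = C * ((n:ℝ) + 1) ^ (-(α + 2)) := by
        rw [mul_div_assoc, div_eq_mul_inv, ← Real.rpow_neg_one ((n:ℝ) + 1),
          ← Real.rpow_add hp1]
        ring_nf

lemma summable_abs_gbinom_mul_pow {α x : ℝ} (hα : -1 < α) (hx0 : 0 ≤ x) (hx1 : x < 1) :
    Summable (fun n : ℕ => |gbinom α n * x ^ n|) := by
  obtain ⟨N, hN⟩ := exists_nat_ge α
  apply summable_of_ratio_norm_eventually_le hx1
  filter_upwards [Filter.eventually_ge_atTop N] with n hn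
  have hαn : α ≤ (n:ℝ) := hN.trans (by exact_mod_cast hn)
  have hr : ((n:ℝ) - α) / ((n:ℝ) + 1) ≤ 1 := by
    rw [div_le_one (by positivity)]; linarith
  rw [Real.norm_eq_abs, Real.norm_eq_abs, abs_abs, abs_abs, abs_mul, abs_mul,
    abs_gbinom_succ hαn, abs_pow, abs_pow, abs_of_nonneg hx0, pow_succ]
  calc |gbinom α n| * (((n:ℝ) - α) / ((n:ℝ) + 1)) * (x ^ n * x)
      ≤ |gbinom α n| * 1 * (x ^ n * x) := by
        apply mul_le_mul_of_nonneg_right _ (by positivity)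
        exact mul_le_mul_of_nonneg_left hr (abs_nonneg _)
    _ = x * (|gbinom α n| * x ^ n) := by ring

lemma hasDerivAt_one_add_rpow {t q : ℝ} (ht : 0 < 1 + t) :
    HasDerivAt (fun s : ℝ => (1 + s) ^ q) (q * (1 + t) ^ (q - 1)) t := by
  have h1 : HasDerivAt (fun s : ℝ => 1 + s) 1 t := (hasDerivAt_id t).const_add 1
  have := h1.rpow_const (p := q) (Or.inl ht.ne')
  simpa using this

lemma iteratedDerivWithin_one_add_rpow {α x : ℝ} (hx : 0 < x) (k : ℕ) :
    ∀ t ∈ Icc (0:ℝ) x, iteratedDerivWithin k (fun s => (1 + s) ^ α) (Icc 0 x) t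
      = (∏ i ∈ Finset.range k, (α - (i:ℝ))) * (1 + t) ^ (α - k) := by
  induction k with
  | zero => intro t ht; simp
  | succ k ih =>
    intro t ht
    have hu : UniqueDiffOn ℝ (Icc (0:ℝ) x) := uniqueDiffOn_Icc hx
    have h1t : (0:ℝ) < 1 + t := by linarith [ht.1]
    rw [iteratedDerivWithin_succ]
    rw [derivWithin_congr (fun s hs => ih s hs) (ih t ht)]
    have hd : HasDerivAt (fun s : ℝ => (∏ i ∈ Finset.range k, (α - (i:ℝ))) * (1 + s) ^ (α - k))
        ((∏ i ∈ Finset.range k, (α - (i:ℝ))) * ((α - k) * (1 + t) ^ (α - k - 1))) t :=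
      (hasDerivAt_one_add_rpow (q := α - k) h1t).const_mul _
    rw [(hd.hasDerivWithinAt).derivWithin (hu t ht)]
    rw [Finset.prod_range_succ]
    push_cast
    rw [show α - (k:ℝ) - 1 = α - ((k:ℝ) + 1) by ring]
    ring

lemma hasSum_binomial {α x : ℝ} (hα : -1 < α) (hx0 : 0 < x) (hx1 : x < 1) :
    HasSum (fun n : ℕ => gbinom α n * x ^ n) ((1 + x) ^ α) := by
  have habs : Summable (fun n : ℕ => |gbinom α n * x ^ n|) :=
    summable_abs_gbinom_mul_pow hα hx0.le hx1
  have hsum : Summable (fun n : ℕ => gbinom α n * x ^ n) := summable_abs_iff.mp habs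
  have hcd : ∀ n : ℕ, ContDiffOn ℝ n (fun s : ℝ => (1 + s) ^ α) (Icc 0 x) := by
    intro n t ht
    have h1t : (0:ℝ) < 1 + t := by linarith [ht.1]
    exact (((contDiff_const.add contDiff_id).contDiffAt (x := t)).rpow_const_of_ne
      h1t.ne').contDiffWithinAt
  have hdiff : ∀ n : ℕ, DifferentiableOn ℝ
      (iteratedDerivWithin n (fun s : ℝ => (1 + s) ^ α) (Icc 0 x)) (Ioo 0 x) := by
    intro n
    have hg : DifferentiableOn ℝ
        (fun t : ℝ => (∏ i ∈ Finset.range n, (α - (i:ℝ))) * (1 + t) ^ (α - n)) (Ioo 0 x) := by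
      intro t ht
      have h1t : (0:ℝ) < 1 + t := by linarith [ht.1]
      exact (((hasDerivAt_one_add_rpow (q := α - n) h1t).const_mul
        _).differentiableAt).differentiableWithinAt
    exact hg.congr fun t ht =>
      iteratedDerivWithin_one_add_rpow hx0 n t (Ioo_subset_Icc_self ht)
  have key : ∀ n : ℕ, α ≤ (n:ℝ) →
      |(1 + x) ^ α - ∑ k ∈ Finset.range (n + 1), gbinom α k * x ^ k|
        ≤ |gbinom α (n + 1) * x ^ (n + 1)| := by
    intro n hn
    have htl := taylor_mean_remainder_lagrange (x₀ := 0) (x := x) (n := n) hx0.ne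
      (by rw [uIcc_of_le hx0.le]; exact hcd n)
      (by rw [uIcc_of_le hx0.le, uIoo_of_le hx0.le]; exact hdiff n)
    rw [uIcc_of_le hx0.le, uIoo_of_le hx0.le] at htl
    obtain ⟨x', hx', heq⟩ := htl
    have hT : taylorWithinEval (fun s : ℝ => (1 + s) ^ α) n (Icc 0 x) 0 x
        = ∑ k ∈ Finset.range (n + 1), gbinom α k * x ^ k := by
      rw [taylor_within_apply]
      apply Finset.sum_congr rfl
      intro k _
      rw [iteratedDerivWithin_one_add_rpow hx0 k 0 (left_mem_Icc.2 hx0.le)]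
      simp only [add_zero, Real.one_rpow, smul_eq_mul, sub_zero, gbinom]
      ring
    have hx'Icc : x' ∈ Icc (0:ℝ) x := Ioo_subset_Icc_self hx'
    rw [iteratedDerivWithin_one_add_rpow hx0 (n + 1) x' hx'Icc] at heq
    rw [hT] at heq
    rw [heq, sub_zero]
    have h1x' : (0:ℝ) < 1 + x' := by linarith [hx'.1]
    have hb1 : (1 + x') ^ (α - ((n + 1 : ℕ) : ℝ)) ≤ 1 := by
      apply Real.rpow_le_one_of_one_le_of_nonpos (by linarith [hx'.1])
      push_cast; linarith
    have hb0 : (0:ℝ) ≤ (1 + x') ^ (α - ((n + 1 : ℕ) : ℝ)) := Real.rpow_nonneg h1x'.le _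
    have hgb : gbinom α (n + 1)
        = (∏ i ∈ Finset.range (n + 1), (α - (i:ℝ))) / ((n + 1).factorial : ℝ) := rfl
    have e1 : (∏ i ∈ Finset.range (n + 1), (α - (i:ℝ))) * (1 + x') ^ (α - ((n + 1 : ℕ) : ℝ))
          * x ^ (n + 1) / ((n + 1).factorial : ℝ)
        = (gbinom α (n + 1) * x ^ (n + 1)) * (1 + x') ^ (α - ((n + 1 : ℕ) : ℝ)) := by
      rw [hgb]; ring
    rw [e1, abs_mul]
    calc |gbinom α (n + 1) * x ^ (n + 1)| * |(1 + x') ^ (α - ((n + 1 : ℕ) : ℝ))|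
        ≤ |gbinom α (n + 1) * x ^ (n + 1)| * 1 := by
          apply mul_le_mul_of_nonneg_left _ (abs_nonneg _)
          rw [abs_of_nonneg hb0]; exact hb1
      _ = |gbinom α (n + 1) * x ^ (n + 1)| := mul_one _
  -- limit of partial sums
  obtain ⟨N, hN⟩ := exists_nat_ge α
  have htail : Filter.Tendsto (fun n : ℕ => |gbinom α (n + 1) * x ^ (n + 1)|) atTop (𝓝 0) :=
    (habs.tendsto_atTop_zero).comp (tendsto_add_atTop_nat 1)
  have hdiff0 : Filter.Tendsto
      (fun n : ℕ => (1 + x) ^ α - ∑ k ∈ Finset.range (n + 1), gbinom α k * x ^ k) atTop (𝓝 0) := by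
    apply squeeze_zero_norm' _ htail
    filter_upwards [Filter.eventually_ge_atTop N] with n hn
    exact key n (hN.trans (by exact_mod_cast hn))
  have hS1 : Filter.Tendsto
      (fun n : ℕ => ∑ k ∈ Finset.range (n + 1), gbinom α k * x ^ k) atTop (𝓝 ((1 + x) ^ α)) := by
    have := (tendsto_const_nhds (x := (1 + x) ^ α) (f := atTop (α := ℕ))).sub hdiff0
    simpa using this
  have hS : Filter.Tendsto
      (fun n : ℕ => ∑ k ∈ Finset.range n, gbinom α k * x ^ k) atTop (𝓝 ((1 + x) ^ α)) :=
    (tendsto_add_atTop_iff_nat 1).mp hS1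
  have := hsum.hasSum.tendsto_sum_nat
  have heq := tendsto_nhds_unique this hS
  rw [← heq]
  exact hsum.hasSum

lemma gaussPDF_shift (μ v : ℝ) :
    gaussPDF v * Real.exp (μ * v) = Real.exp (μ ^ 2 / 2) * gaussPDF (v - μ) := by
  have h : Real.exp (-v ^ 2 / 2) * Real.exp (μ * v)
      = Real.exp (μ ^ 2 / 2) * Real.exp (-(v - μ) ^ 2 / 2) := by
    rw [← Real.exp_add, ← Real.exp_add]; congr 1; ring
  unfold gaussPDF
  rw [div_mul_eq_mul_div, h, mul_div_assoc]

lemma gaussPDF_neg (v : ℝ) : gaussPDF (-v) = gaussPDF v := by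
  unfold gaussPDF; rw [neg_sq]

lemma integrable_gaussPDF : Integrable gaussPDF := by
  unfold gaussPDF
  simp_rw [div_eq_mul_inv]
  apply Integrable.mul_const
  refine (integrable_exp_neg_mul_sq (by norm_num : (0:ℝ) < 2⁻¹)).congr ?_
  filter_upwards with v
  congr 1
  ring

lemma integrable_gaussPDF_exp (μ : ℝ) :
    Integrable (fun v => gaussPDF v * Real.exp (μ * v)) := by
  simp_rw [gaussPDF_shift]
  exact ((integrable_gaussPDF.comp_sub_right μ).const_mul _)

lemma integral_Iic_gaussPDF_shift (c μ : ℝ) :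
    ∫ v in Iic c, gaussPDF (v - μ) = stdNormalCDF (c - μ) := by
  rw [stdNormalCDF, ← integral_indicator measurableSet_Iic,
    ← integral_indicator measurableSet_Iic,
    ← integral_sub_right_eq_self (fun v => (Iic (c - μ)).indicator gaussPDF v) μ]
  congr 1
  funext v
  simp only [indicator_apply, mem_Iic, sub_le_sub_iff_right]

lemma integral_Iic_gauss_exp (c μ : ℝ) :
    ∫ v in Iic c, gaussPDF v * Real.exp (μ * v)
      = Real.exp (μ ^ 2 / 2) * stdNormalCDF (c - μ) := by
  simp_rw [gaussPDF_shift]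
  rw [MeasureTheory.integral_const_mul, integral_Iic_gaussPDF_shift]

lemma integral_Ioi_gauss_exp (c μ : ℝ) :
    ∫ v in Ioi c, gaussPDF v * Real.exp (μ * v)
      = Real.exp (μ ^ 2 / 2) * stdNormalCDF (μ - c) := by
  have h := integral_comp_neg_Ioi c (fun w => gaussPDF w * Real.exp (-μ * w))
  simp only [gaussPDF_neg, neg_mul, mul_neg, neg_neg] at h
  rw [h]
  simp_rw [← neg_mul]
  rw [integral_Iic_gauss_exp]
  rw [show (-μ) ^ 2 = μ ^ 2 by ring, show -c - -μ = μ - c by ring]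

lemma stdNormalCDF_nonneg (z : ℝ) : 0 ≤ stdNormalCDF z :=
  setIntegral_nonneg measurableSet_Iic fun v _ => by unfold gaussPDF; positivity

lemma integrable_gauss_lin (a b' : ℝ) :
    Integrable (fun v => gaussPDF v * Real.exp (a + b' * v)) := by
  have h := (integrable_gaussPDF_exp b').const_mul (Real.exp a)
  refine h.congr ?_
  filter_upwards with v
  rw [Real.exp_add]; ring

lemma integrable_gauss_affine (m A B : ℝ) :
    Integrable (fun v => gaussPDF v * Real.exp (m * (A + B * v))) := by
  have h := integrable_gauss_lin (m * A) (m * B)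
  refine h.congr ?_
  filter_upwards with v
  congr 2
  ring

lemma gauss_affine_nonneg (m A B v : ℝ) : 0 ≤ gaussPDF v * Real.exp (m * (A + B * v)) :=
  mul_nonneg (gaussPDF_pos v).le (Real.exp_nonneg _)

lemma IicT {A B : ℝ} (m : ℝ) :
    ∫ v in Iic (-A / B), gaussPDF v * Real.exp (m * (A + B * v))
      = Real.exp (m * A + m ^ 2 * B ^ 2 / 2) * stdNormalCDF (-A / B - m * B) := by
  have h : ∀ v : ℝ, gaussPDF v * Real.exp (m * (A + B * v))
      = Real.exp (m * A) * (gaussPDF v * Real.exp ((m * B) * v)) := by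
    intro v
    rw [show m * (A + B * v) = m * A + (m * B) * v by ring, Real.exp_add]; ring
  simp_rw [h]
  rw [MeasureTheory.integral_const_mul, integral_Iic_gauss_exp, ← mul_assoc, ← Real.exp_add,
    show m * A + (m * B) ^ 2 / 2 = m * A + m ^ 2 * B ^ 2 / 2 by ring]

lemma IoiT {A B : ℝ} (m : ℝ) :
    ∫ v in Ioi (-A / B), gaussPDF v * Real.exp (m * (A + B * v))
      = Real.exp (m * A + m ^ 2 * B ^ 2 / 2) * stdNormalCDF (A / B + m * B) := by
  have h : ∀ v : ℝ, gaussPDF v * Real.exp (m * (A + B * v))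
      = Real.exp (m * A) * (gaussPDF v * Real.exp ((m * B) * v)) := by
    intro v
    rw [show m * (A + B * v) = m * A + (m * B) * v by ring, Real.exp_add]; ring
  simp_rw [h]
  rw [MeasureTheory.integral_const_mul, integral_Ioi_gauss_exp, ← mul_assoc, ← Real.exp_add,
    show m * A + (m * B) ^ 2 / 2 = m * A + m ^ 2 * B ^ 2 / 2 by ring,
    show m * B - -A / B = A / B + m * B by ring]

lemma Iic_norm_bound {A B : ℝ} (hB : 0 < B) {m : ℝ} (hm : 0 < m) :
    ∫ v in Iic (-A / B), gaussPDF v * Real.exp (m * (A + B * v))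
      ≤ 1 / (Real.sqrt (2 * Real.pi) * B) / m := by
  have hmB : 0 < m * B := mul_pos hm hB
  have hintR : IntegrableOn
      (fun v => 1 / Real.sqrt (2 * Real.pi) * (Real.exp (m * A) * Real.exp ((m * B) * v)))
      (Iic (-A / B)) :=
    (((integrableOn_exp_mul_Iic hmB (-A / B)).const_mul (Real.exp (m * A))).const_mul _)
  have hle : ∀ v ∈ Iic (-A / B), gaussPDF v * Real.exp (m * (A + B * v))
      ≤ 1 / Real.sqrt (2 * Real.pi) * (Real.exp (m * A) * Real.exp ((m * B) * v)) := by
    intro v _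
    rw [show m * (A + B * v) = m * A + (m * B) * v by ring, Real.exp_add]
    have h1 := gaussPDF_le v
    have h2 : (0:ℝ) < Real.exp (m * A) * Real.exp (m * B * v) := by positivity
    calc gaussPDF v * (Real.exp (m * A) * Real.exp (m * B * v))
        ≤ 1 / Real.sqrt (2 * Real.pi) * (Real.exp (m * A) * Real.exp (m * B * v)) :=
          mul_le_mul_of_nonneg_right h1 h2.le
      _ = _ := rfl
  have hmono := setIntegral_mono_on
    ((integrable_gauss_affine m A B).integrableOn) hintR measurableSet_Iic hle
  refine hmono.trans ?_
  rw [MeasureTheory.integral_const_mul, MeasureTheory.integral_const_mul,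
    integral_exp_mul_Iic hmB]
  rw [show m * B * (-A / B) = -(m * A) by field_simp]
  rw [show Real.exp (m * A) * (Real.exp (-(m * A)) / (m * B)) = 1 / (m * B) by
    rw [mul_div_assoc', ← Real.exp_add, add_neg_cancel, Real.exp_zero]]
  apply le_of_eq
  field_simp

lemma Ioi_norm_bound {A B : ℝ} (hB : 0 < B) {m : ℝ} (hm : m < 0) :
    ∫ v in Ioi (-A / B), gaussPDF v * Real.exp (m * (A + B * v))
      ≤ 1 / (Real.sqrt (2 * Real.pi) * B) / (-m) := by
  have h := integral_comp_neg_Ioi (-A / B)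
    (fun w => gaussPDF w * Real.exp ((-m) * (-A + B * w)))
  have heq : ∀ x : ℝ, gaussPDF (-x) * Real.exp ((-m) * (-A + B * (-x)))
      = gaussPDF x * Real.exp (m * (A + B * x)) := by
    intro x
    rw [gaussPDF_neg]
    congr 1
    ring_nf
  simp only [heq] at h
  rw [h]
  have hb := Iic_norm_bound (A := -A) hB (neg_pos.mpr hm)
  rw [show -(-A) / B = A / B by ring] at hb
  rw [show -(-A / B) = A / B by ring]
  exact hb
/-- Exact term-by-term integrated binomial-series representation of `I_{p,ℓ}(A,B)`,
obtained by splitting the integral at `v* = -A/B`; both series converge absolutely. -/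
theorem Iint_series (p ℓ A B : ℝ) (hB : 0 < B) (hpl : p - ℓ > -1) :
    Summable (fun n : ℕ => |gbinom (p - ℓ) n
        * (Real.exp (((n : ℝ) + ℓ) * A + ((n : ℝ) + ℓ) ^ 2 * B ^ 2 / 2)
            * stdNormalCDF (-A / B - ((n : ℝ) + ℓ) * B))|) ∧
    Summable (fun n : ℕ => |gbinom (p - ℓ) n
        * (Real.exp ((p - (n : ℝ)) * A + (p - (n : ℝ)) ^ 2 * B ^ 2 / 2)
            * stdNormalCDF (A / B + (p - (n : ℝ)) * B))|) ∧
    Iint p ℓ A B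
      = ∑' n : ℕ, gbinom (p - ℓ) n
          * (Real.exp (((n : ℝ) + ℓ) * A + ((n : ℝ) + ℓ) ^ 2 * B ^ 2 / 2)
                * stdNormalCDF (-A / B - ((n : ℝ) + ℓ) * B)
             + Real.exp ((p - (n : ℝ)) * A + (p - (n : ℝ)) ^ 2 * B ^ 2 / 2)
                * stdNormalCDF (A / B + (p - (n : ℝ)) * B)) := by
  have hα1 : -1 < p - ℓ := hpl
  set α := p - ℓ with hαdef
  set F : ℝ → ℝ :=
    fun v => gaussPDF v * (1 + Real.exp (A + B * v)) ^ α * Real.exp (ℓ * (A + B * v)) with hF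
  set K := 1 / (Real.sqrt (2 * Real.pi) * B) with hK
  have hK0 : 0 ≤ K := by rw [hK]; positivity
  -- norm integral computations
  have hT1 : ∀ n : ℕ,
      (∫ v in Iic (-A / B), ‖gbinom α n * (gaussPDF v * Real.exp (((n:ℝ) + ℓ) * (A + B * v)))‖)
        = |gbinom α n| * ∫ v in Iic (-A / B), gaussPDF v * Real.exp (((n:ℝ) + ℓ) * (A + B * v)) := by
    intro n
    have h : ∀ v : ℝ, ‖gbinom α n * (gaussPDF v * Real.exp (((n:ℝ) + ℓ) * (A + B * v)))‖
        = |gbinom α n| * (gaussPDF v * Real.exp (((n:ℝ) + ℓ) * (A + B * v))) := fun v => by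
      rw [Real.norm_eq_abs, abs_mul, abs_of_nonneg (gauss_affine_nonneg _ _ _ _)]
    simp_rw [h]
    rw [MeasureTheory.integral_const_mul]
  have hT2 : ∀ n : ℕ,
      (∫ v in Ioi (-A / B), ‖gbinom α n * (gaussPDF v * Real.exp ((p - (n:ℝ)) * (A + B * v)))‖)
        = |gbinom α n| * ∫ v in Ioi (-A / B), gaussPDF v * Real.exp ((p - (n:ℝ)) * (A + B * v)) := by
    intro n
    have h : ∀ v : ℝ, ‖gbinom α n * (gaussPDF v * Real.exp ((p - (n:ℝ)) * (A + B * v)))‖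
        = |gbinom α n| * (gaussPDF v * Real.exp ((p - (n:ℝ)) * (A + B * v))) := fun v => by
      rw [Real.norm_eq_abs, abs_mul, abs_of_nonneg (gauss_affine_nonneg _ _ _ _)]
    simp_rw [h]
    rw [MeasureTheory.integral_const_mul]
  -- summability of the norm integrals
  have hsum1 : Summable (fun n : ℕ =>
      ∫ v in Iic (-A / B), ‖gbinom α n * (gaussPDF v * Real.exp (((n:ℝ) + ℓ) * (A + B * v)))‖) := by
    obtain ⟨N, hN⟩ := exists_nat_ge (1 - 2 * ℓ)
    rw [← summable_nat_add_iff N]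
    refine Summable.of_nonneg_of_le (fun k => integral_nonneg fun v => norm_nonneg _)
      (fun k => ?_) ((summable_nat_add_iff N).mpr
        ((summable_abs_gbinom_div hα1).mul_left (2 * K)))
    have hcast : ((k + N : ℕ) : ℝ) = (k : ℝ) + (N : ℝ) := by push_cast; ring
    have hk0 : (0:ℝ) ≤ (k : ℝ) := Nat.cast_nonneg k
    have hm2 : (((k + N : ℕ) : ℝ) + 1) / 2 ≤ ((k + N : ℕ) : ℝ) + ℓ := by
      rw [hcast]; linarith
    have hm0 : 0 < ((k + N : ℕ) : ℝ) + ℓ := by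
      have : (0:ℝ) < (((k + N : ℕ) : ℝ) + 1) / 2 := by positivity
      linarith
    rw [hT1 (k + N)]
    have hbnd := Iic_norm_bound (A := A) hB hm0
    calc |gbinom α (k + N)|
          * ∫ v in Iic (-A / B), gaussPDF v * Real.exp ((((k + N : ℕ):ℝ) + ℓ) * (A + B * v))
        ≤ |gbinom α (k + N)| * (K / (((k + N : ℕ):ℝ) + ℓ)) :=
          mul_le_mul_of_nonneg_left hbnd (abs_nonneg _)
      _ ≤ |gbinom α (k + N)| * (2 * K / (((k + N : ℕ):ℝ) + 1)) := by
          apply mul_le_mul_of_nonneg_left _ (abs_nonneg _)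
          have h1 : K / (((k + N : ℕ):ℝ) + ℓ) ≤ K / ((((k + N : ℕ):ℝ) + 1) / 2) :=
            div_le_div_of_nonneg_left hK0 (by positivity) hm2
          have h2 : K / ((((k + N : ℕ):ℝ) + 1) / 2) = 2 * K / (((k + N : ℕ):ℝ) + 1) := by
            rw [div_div_eq_mul_div]; ring
          rw [h2] at h1; exact h1
      _ = 2 * K * (|gbinom α (k + N)| / (((k + N : ℕ):ℝ) + 1)) := by ring
  have hsum2 : Summable (fun n : ℕ =>
      ∫ v in Ioi (-A / B), ‖gbinom α n * (gaussPDF v * Real.exp ((p - (n:ℝ)) * (A + B * v)))‖) := by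
    obtain ⟨N, hN⟩ := exists_nat_ge (2 * p + 1)
    rw [← summable_nat_add_iff N]
    refine Summable.of_nonneg_of_le (fun k => integral_nonneg fun v => norm_nonneg _)
      (fun k => ?_) ((summable_nat_add_iff N).mpr
        ((summable_abs_gbinom_div hα1).mul_left (2 * K)))
    have hcast : ((k + N : ℕ) : ℝ) = (k : ℝ) + (N : ℝ) := by push_cast; ring
    have hk0 : (0:ℝ) ≤ (k : ℝ) := Nat.cast_nonneg k
    have hm2 : (((k + N : ℕ) : ℝ) + 1) / 2 ≤ ((k + N : ℕ) : ℝ) - p := by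
      rw [hcast]; linarith
    have hm0 : p - ((k + N : ℕ) : ℝ) < 0 := by
      have : (0:ℝ) < (((k + N : ℕ) : ℝ) + 1) / 2 := by positivity
      linarith
    rw [hT2 (k + N)]
    have hbnd := Ioi_norm_bound (A := A) hB hm0
    rw [show -(p - ((k + N : ℕ) : ℝ)) = ((k + N : ℕ) : ℝ) - p by ring] at hbnd
    calc |gbinom α (k + N)|
          * ∫ v in Ioi (-A / B), gaussPDF v * Real.exp ((p - ((k + N : ℕ):ℝ)) * (A + B * v))
        ≤ |gbinom α (k + N)| * (K / (((k + N : ℕ):ℝ) - p)) :=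
          mul_le_mul_of_nonneg_left hbnd (abs_nonneg _)
      _ ≤ |gbinom α (k + N)| * (2 * K / (((k + N : ℕ):ℝ) + 1)) := by
          apply mul_le_mul_of_nonneg_left _ (abs_nonneg _)
          have h1 : K / (((k + N : ℕ):ℝ) - p) ≤ K / ((((k + N : ℕ):ℝ) + 1) / 2) :=
            div_le_div_of_nonneg_left hK0 (by positivity) hm2
          have h2 : K / ((((k + N : ℕ):ℝ) + 1) / 2) = 2 * K / (((k + N : ℕ):ℝ) + 1) := by
            rw [div_div_eq_mul_div]; ring
          rw [h2] at h1; exact h1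
      _ = 2 * K * (|gbinom α (k + N)| / (((k + N : ℕ):ℝ) + 1)) := by ring
  -- term integral identities
  have hfa : ∀ n : ℕ,
      (∫ v in Iic (-A / B), gbinom α n * (gaussPDF v * Real.exp (((n:ℝ) + ℓ) * (A + B * v))))
        = gbinom α n * (Real.exp (((n:ℝ) + ℓ) * A + ((n:ℝ) + ℓ) ^ 2 * B ^ 2 / 2)
            * stdNormalCDF (-A / B - ((n:ℝ) + ℓ) * B)) := fun n => by
    rw [MeasureTheory.integral_const_mul, IicT]
  have hga : ∀ n : ℕ,
      (∫ v in Ioi (-A / B), gbinom α n * (gaussPDF v * Real.exp ((p - (n:ℝ)) * (A + B * v))))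
        = gbinom α n * (Real.exp ((p - (n:ℝ)) * A + (p - (n:ℝ)) ^ 2 * B ^ 2 / 2)
            * stdNormalCDF (A / B + (p - (n:ℝ)) * B)) := fun n => by
    rw [MeasureTheory.integral_const_mul, IoiT]
  -- the two summability conjuncts
  have conj1 : Summable (fun n : ℕ => |gbinom α n
      * (Real.exp (((n:ℝ) + ℓ) * A + ((n:ℝ) + ℓ) ^ 2 * B ^ 2 / 2)
          * stdNormalCDF (-A / B - ((n:ℝ) + ℓ) * B))|) := by
    refine hsum1.congr fun n => ?_
    rw [hT1 n, IicT, abs_mul,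
      abs_of_nonneg (mul_nonneg (Real.exp_nonneg _) (stdNormalCDF_nonneg _))]
  have conj2 : Summable (fun n : ℕ => |gbinom α n
      * (Real.exp ((p - (n:ℝ)) * A + (p - (n:ℝ)) ^ 2 * B ^ 2 / 2)
          * stdNormalCDF (A / B + (p - (n:ℝ)) * B))|) := by
    refine hsum2.congr fun n => ?_
    rw [hT2 n, IoiT, abs_mul,
      abs_of_nonneg (mul_nonneg (Real.exp_nonneg _) (stdNormalCDF_nonneg _))]
  -- pointwise series expansions
  have hsumIio : ∀ v ∈ Iio (-A / B), HasSum
      (fun n : ℕ => gbinom α n * (gaussPDF v * Real.exp (((n:ℝ) + ℓ) * (A + B * v)))) (F v) := by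
    intro v hv
    have hu : A + B * v < 0 := by
      have h1 : B * v < B * (-A / B) := (mul_lt_mul_iff_right₀ hB).2 hv
      rw [show B * (-A / B) = -A by first | (field_simp; ring) | field_simp] at h1
      linarith
    have h1 := hasSum_binomial hα1 (Real.exp_pos (A + B * v)) (Real.exp_lt_one_iff.mpr hu)
    have h2 := h1.mul_right (gaussPDF v * Real.exp (ℓ * (A + B * v)))
    have hfun : (fun n : ℕ => gbinom α n * Real.exp (A + B * v) ^ n
          * (gaussPDF v * Real.exp (ℓ * (A + B * v))))
        = fun n : ℕ => gbinom α n * (gaussPDF v * Real.exp (((n:ℝ) + ℓ) * (A + B * v))) := by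
      funext n
      rw [show ((n:ℝ) + ℓ) * (A + B * v) = (n:ℝ) * (A + B * v) + ℓ * (A + B * v) by ring,
        Real.exp_add ((n:ℝ) * (A + B * v)) (ℓ * (A + B * v)), Real.exp_nat_mul]
      ring
    rw [hfun] at h2
    have hFv : F v = (1 + Real.exp (A + B * v)) ^ α
        * (gaussPDF v * Real.exp (ℓ * (A + B * v))) := by
      simp only [hF]; ring
    rw [hFv]
    exact h2
  have hsumIoi : ∀ v ∈ Ioi (-A / B), HasSum
      (fun n : ℕ => gbinom α n * (gaussPDF v * Real.exp ((p - (n:ℝ)) * (A + B * v)))) (F v) := by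
    intro v hv
    have hu : 0 < A + B * v := by
      have h1 : B * (-A / B) < B * v := (mul_lt_mul_iff_right₀ hB).2 hv
      rw [show B * (-A / B) = -A by first | (field_simp; ring) | field_simp] at h1
      linarith
    have h1 := hasSum_binomial hα1 (Real.exp_pos (-(A + B * v)))
      (Real.exp_lt_one_iff.mpr (by linarith))
    have h2 := h1.mul_right (gaussPDF v * Real.exp (p * (A + B * v)))
    have hfun : (fun n : ℕ => gbinom α n * Real.exp (-(A + B * v)) ^ n
          * (gaussPDF v * Real.exp (p * (A + B * v))))
        = fun n : ℕ => gbinom α n * (gaussPDF v * Real.exp ((p - (n:ℝ)) * (A + B * v))) := by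
      funext n
      rw [show (p - (n:ℝ)) * (A + B * v) = (n:ℝ) * (-(A + B * v)) + p * (A + B * v) by ring,
        Real.exp_add ((n:ℝ) * (-(A + B * v))) (p * (A + B * v)), Real.exp_nat_mul]
      ring
    rw [hfun] at h2
    have hsplitbase : (1:ℝ) + Real.exp (A + B * v)
        = Real.exp (A + B * v) * (1 + Real.exp (-(A + B * v))) := by
      rw [mul_add, mul_one, ← Real.exp_add, add_neg_cancel, Real.exp_zero]; ring
    have hFv : F v = (1 + Real.exp (-(A + B * v))) ^ α
        * (gaussPDF v * Real.exp (p * (A + B * v))) := by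
      simp only [hF]
      rw [hsplitbase, Real.mul_rpow (Real.exp_nonneg _) (by positivity), ← Real.exp_mul]
      calc gaussPDF v * (Real.exp ((A + B * v) * α) * (1 + Real.exp (-(A + B * v))) ^ α)
            * Real.exp (ℓ * (A + B * v))
          = (1 + Real.exp (-(A + B * v))) ^ α
            * (gaussPDF v * (Real.exp ((A + B * v) * α) * Real.exp (ℓ * (A + B * v)))) := by ring
        _ = (1 + Real.exp (-(A + B * v))) ^ α
            * (gaussPDF v * Real.exp (p * (A + B * v))) := by
            rw [← Real.exp_add,
              show (A + B * v) * α + ℓ * (A + B * v) = p * (A + B * v) by rw [hαdef]; ring]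
    rw [hFv]
    exact h2
  -- integrability of F
  have h2pow : ∀ y : ℝ, 0 ≤ y → y ≤ 1 → (1 + y) ^ α ≤ 2 ^ |α| := by
    intro y h0 h1
    have h20 : (1:ℝ) ≤ 2 := by norm_num
    rcases le_or_gt 0 α with hα0 | hα0
    · calc (1 + y) ^ α ≤ 2 ^ α :=
            Real.rpow_le_rpow (by linarith) (by linarith) hα0
        _ ≤ 2 ^ |α| := Real.rpow_le_rpow_of_exponent_le h20 (le_abs_self α)
    · calc (1 + y) ^ α ≤ 1 := Real.rpow_le_one_of_one_le_of_nonpos (by linarith) hα0.le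
        _ ≤ 2 ^ |α| := by
            calc (1:ℝ) = 2 ^ (0:ℝ) := (Real.rpow_zero 2).symm
              _ ≤ 2 ^ |α| := Real.rpow_le_rpow_of_exponent_le h20 (abs_nonneg α)
  have hFle : ∀ v : ℝ, ‖F v‖ ≤ 2 ^ |α|
      * (gaussPDF v * Real.exp (p * (A + B * v)) + gaussPDF v * Real.exp (ℓ * (A + B * v))) := by
    intro v
    have hF0 : 0 ≤ F v := by
      simp only [hF]
      have := gaussPDF_pos v
      positivity
    rw [Real.norm_eq_abs, abs_of_nonneg hF0]
    have hnn1 : 0 ≤ gaussPDF v * Real.exp (p * (A + B * v)) := gauss_affine_nonneg _ _ _ _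
    have hnn2 : 0 ≤ gaussPDF v * Real.exp (ℓ * (A + B * v)) := gauss_affine_nonneg _ _ _ _
    rcases le_total (A + B * v) 0 with hu | hu
    · have h1 : (1 + Real.exp (A + B * v)) ^ α ≤ 2 ^ |α| :=
        h2pow _ (Real.exp_nonneg _) (Real.exp_le_one_iff.mpr hu)
      calc F v = (1 + Real.exp (A + B * v)) ^ α
            * (gaussPDF v * Real.exp (ℓ * (A + B * v))) := by simp only [hF]; ring
        _ ≤ 2 ^ |α| * (gaussPDF v * Real.exp (ℓ * (A + B * v))) :=
            mul_le_mul_of_nonneg_right h1 hnn2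
        _ ≤ 2 ^ |α| * (gaussPDF v * Real.exp (p * (A + B * v))
              + gaussPDF v * Real.exp (ℓ * (A + B * v))) := by
            apply mul_le_mul_of_nonneg_left _ (by positivity)
            linarith
    · have hsplitbase : (1:ℝ) + Real.exp (A + B * v)
          = Real.exp (A + B * v) * (1 + Real.exp (-(A + B * v))) := by
        rw [mul_add, mul_one, ← Real.exp_add, add_neg_cancel, Real.exp_zero]; ring
      have h1 : (1 + Real.exp (-(A + B * v))) ^ α ≤ 2 ^ |α| :=
        h2pow _ (Real.exp_nonneg _) (Real.exp_le_one_iff.mpr (by linarith))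
      have hFv : F v = (1 + Real.exp (-(A + B * v))) ^ α
          * (gaussPDF v * Real.exp (p * (A + B * v))) := by
        simp only [hF]
        rw [hsplitbase, Real.mul_rpow (Real.exp_nonneg _) (by positivity), ← Real.exp_mul]
        calc gaussPDF v * (Real.exp ((A + B * v) * α) * (1 + Real.exp (-(A + B * v))) ^ α)
              * Real.exp (ℓ * (A + B * v))
            = (1 + Real.exp (-(A + B * v))) ^ α
              * (gaussPDF v * (Real.exp ((A + B * v) * α) * Real.exp (ℓ * (A + B * v)))) := by
              ring
          _ = (1 + Real.exp (-(A + B * v))) ^ α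
              * (gaussPDF v * Real.exp (p * (A + B * v))) := by
              rw [← Real.exp_add,
                show (A + B * v) * α + ℓ * (A + B * v) = p * (A + B * v) by rw [hαdef]; ring]
      calc F v = (1 + Real.exp (-(A + B * v))) ^ α
            * (gaussPDF v * Real.exp (p * (A + B * v))) := hFv
        _ ≤ 2 ^ |α| * (gaussPDF v * Real.exp (p * (A + B * v))) :=
            mul_le_mul_of_nonneg_right h1 hnn1
        _ ≤ 2 ^ |α| * (gaussPDF v * Real.exp (p * (A + B * v))
              + gaussPDF v * Real.exp (ℓ * (A + B * v))) := by
            apply mul_le_mul_of_nonneg_left _ (by positivity)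
            linarith
  have hFcont : Continuous F := by
    have hc1 : Continuous (fun v : ℝ => 1 + Real.exp (A + B * v)) := by fun_prop
    have hc2 : Continuous (fun v : ℝ => (1 + Real.exp (A + B * v)) ^ α) :=
      hc1.rpow_const fun v => Or.inl (by positivity)
    rw [hF]
    exact (continuous_gaussPDF.mul hc2).mul (by fun_prop)
  have hFint : Integrable F := by
    apply Integrable.mono'
      (((integrable_gauss_affine p A B).add (integrable_gauss_affine ℓ A B)).const_mul (2 ^ |α|))
      hFcont.aestronglyMeasurable
    exact Filter.Eventually.of_forall hFle
  -- interchange sum and integral on each half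
  have hfint' : ∀ n : ℕ, Integrable
      (fun v => gbinom α n * (gaussPDF v * Real.exp (((n:ℝ) + ℓ) * (A + B * v))))
      (volume.restrict (Iio (-A / B))) :=
    fun n => ((integrable_gauss_affine _ A B).const_mul _).restrict
  have hgint' : ∀ n : ℕ, Integrable
      (fun v => gbinom α n * (gaussPDF v * Real.exp ((p - (n:ℝ)) * (A + B * v))))
      (volume.restrict (Ioi (-A / B))) :=
    fun n => ((integrable_gauss_affine _ A B).const_mul _).restrict
  have hsum1' : Summable (fun n : ℕ =>
      ∫ v in Iio (-A / B), ‖gbinom α n * (gaussPDF v * Real.exp (((n:ℝ) + ℓ) * (A + B * v)))‖) :=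
    hsum1.congr fun n => (setIntegral_congr_set Iio_ae_eq_Iic).symm
  have htsum1 : ∫ v in Iic (-A / B), F v = ∑' n : ℕ,
      ∫ v in Iic (-A / B), gbinom α n * (gaussPDF v * Real.exp (((n:ℝ) + ℓ) * (A + B * v))) := by
    rw [← setIntegral_congr_set Iio_ae_eq_Iic]
    rw [setIntegral_congr_fun measurableSet_Iio
      (fun v hv => ((hsumIio v hv).tsum_eq).symm : EqOn F _ (Iio (-A / B)))]
    rw [← MeasureTheory.integral_tsum_of_summable_integral_norm hfint' hsum1']
    exact tsum_congr fun n => setIntegral_congr_set Iio_ae_eq_Iic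
  have htsum2 : ∫ v in Ioi (-A / B), F v = ∑' n : ℕ,
      ∫ v in Ioi (-A / B), gbinom α n * (gaussPDF v * Real.exp ((p - (n:ℝ)) * (A + B * v))) := by
    rw [setIntegral_congr_fun measurableSet_Ioi
      (fun v hv => ((hsumIoi v hv).tsum_eq).symm : EqOn F _ (Ioi (-A / B)))]
    rw [← MeasureTheory.integral_tsum_of_summable_integral_norm hgint' hsum2]
  -- assemble
  refine ⟨conj1, conj2, ?_⟩
  have hIint : Iint p ℓ A B = ∫ v, F v := by
    simp only [Iint, hF, hαdef]
  rw [hIint, ← intervalIntegral.integral_Iic_add_Ioi (b := -A / B)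
    hFint.integrableOn hFint.integrableOn]
  rw [htsum1, htsum2, tsum_congr hfa, tsum_congr hga]
  rw [← Summable.tsum_add (summable_abs_iff.mp conj1) (summable_abs_iff.mp conj2)]
  exact tsum_congr fun n => by ring
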